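/- Let w = u^p with u primitive. Then w is π-clustering for the ordered alphabet A if and only if u is π-clustering for A. -/

import Mathlib

namespace BWTpaper

variable {A : Type*}

/-- Lexicographic `≤` (as a `Bool`) on lists, induced by a strict order `lt` on letters. -/
def lexLe (lt : A → A → Bool) : List A → List A → Bool
  | [], _ => true
  | _ :: _, [] => false
  | x :: xs, y :: ys => if lt x y then true else if lt y x then false else lexLe lt xs ys

/-- The list of all rotations (conjugates, with multiplicity) of a word. -/
def rotations (w : List A) : List (List A) := (List.range w.length).map (fun i => w.rotate i)

/-- Burrows-Wheeler transform with respect to a strict order `lt` on letters. -/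
def bwtBy (lt : A → A → Bool) (w : List A) : List A :=
  ((rotations w).mergeSort (lexLe lt)).filterMap List.getLast?

def stdLt [LinearOrder A] : A → A → Bool := fun x y => decide (x < y)

/-- Burrows-Wheeler transform w.r.t. the order of a `LinearOrder` alphabet. -/
def bwt [LinearOrder A] (w : List A) : List A := bwtBy stdLt w

def Conjugate (u v : List A) : Prop := ∃ x y : List A, u = x ++ y ∧ v = y ++ x

/-- `u^p`. -/
def wordPow (u : List A) (p : ℕ) : List A := (List.replicate p u).flatten

def Primitive (w : List A) : Prop := w ≠ [] ∧ ∀ (u : List A) (k : ℕ), w = wordPow u k → k = 1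

/-- The letters of the alphabet, sorted increasingly w.r.t. `lt`. -/
noncomputable def sortedAlphabet [Fintype A] (lt : A → A → Bool) : List A :=
  Finset.univ.toList.mergeSort (fun x y => !(lt y x))

/-- `w` is `π`-clustering w.r.t. the letter order `lt`:
its BWT is `π(a₁)^{k₁} ⋯ π(a_d)^{k_d}` where `a₁ < ⋯ < a_d` and `k_i = |w|_{π(a_i)}`. -/
def IsClusteringBy [Fintype A] [DecidableEq A] (lt : A → A → Bool) (π : Equiv.Perm A)
    (w : List A) : Prop :=
  bwtBy lt w = (sortedAlphabet lt).flatMap (fun c => List.replicate (w.count (π c)) (π c))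

def IsClustering [Fintype A] [LinearOrder A] (π : Equiv.Perm A) (w : List A) : Prop :=
  IsClusteringBy stdLt π w

/-- The prefix of length `n` of the periodic infinite word `u^ω`. -/
def omegaTake (u : List A) (n : ℕ) : List A := ((List.replicate n u).flatten).take n

/-- The ω-order: `u ≤_ω v` iff `u^ω ≤ v^ω` lexicographically (decided on the first
`|u| + |v|` letters, which suffices by Fine and Wilf). -/
def omegaLe (lt : A → A → Bool) (u v : List A) : Bool :=
  lexLe lt (omegaTake u (u.length + v.length)) (omegaTake v (u.length + v.length))

/-- Extended Burrows-Wheeler transform of a multiset (list) of words. -/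
def ebwtBy (lt : A → A → Bool) (W : List (List A)) : List A :=
  ((W.flatMap rotations).mergeSort (omegaLe lt)).filterMap List.getLast?

/-- A multiset of words is `π`-clustering if its eBWT consists of the blocks
`π(a₁)^{k₁} ⋯ π(a_d)^{k_d}` with `k_i` the total number of occurrences of `π(a_i)`. -/
def IsClusteringMultisetBy [Fintype A] [DecidableEq A] (lt : A → A → Bool)
    (π : Equiv.Perm A) (W : List (List A)) : Prop :=
  ebwtBy lt W =
    (sortedAlphabet lt).flatMap
      (fun c => List.replicate ((W.map (fun w => w.count (π c))).sum) (π c))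

/-- The morphism `α_{a,b} : a ↦ ab`, `c ↦ c` for `c ≠ a`. -/
def alphaM [DecidableEq A] (a b : A) (w : List A) : List A :=
  w.flatMap (fun c => if c = a then [a, b] else [c])

/-- The morphism `α̃_{a,b} : a ↦ ba`, `c ↦ c` for `c ≠ a`. -/
def tildeM [DecidableEq A] (a b : A) (w : List A) : List A :=
  w.flatMap (fun c => if c = a then [b, a] else [c])



/-! ### Auxiliary lemmas -/

section PowLemmas
variable {A : Type*}

lemma wordPow_succ (u : List A) (p : ℕ) : wordPow u (p+1) = u ++ wordPow u p := by
  simp [wordPow, List.replicate_succ]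

lemma wordPow_succ' (u : List A) (p : ℕ) : wordPow u (p+1) = wordPow u p ++ u := by
  simp [wordPow, List.replicate_succ']

lemma length_wordPow (u : List A) (p : ℕ) : (wordPow u p).length = p * u.length := by
  induction p with
  | zero => simp [wordPow]
  | succ p ih => rw [wordPow_succ]; simp [ih, Nat.succ_mul, Nat.add_comm]

lemma count_wordPow [BEq A] (a : A) (u : List A) (p : ℕ) :
    (wordPow u p).count a = p * u.count a := by
  induction p with
  | zero => simp [wordPow]
  | succ p ih => rw [wordPow_succ, List.count_append, ih, Nat.succ_mul, Nat.add_comm]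

lemma wordPow_shift (x y : List A) (p : ℕ) :
    wordPow (x ++ y) p ++ x = x ++ wordPow (y ++ x) p := by
  induction p with
  | zero => simp [wordPow]
  | succ p ih =>
    rw [wordPow_succ, wordPow_succ, List.append_assoc, ih]
    simp [List.append_assoc]

lemma getLast?_wordPow (u : List A) (hu : u ≠ []) (p : ℕ) (hp : 1 ≤ p) :
    (wordPow u p).getLast? = u.getLast? := by
  obtain ⟨p, rfl⟩ := Nat.exists_eq_add_of_le hp
  rw [Nat.add_comm, wordPow_succ', List.getLast?_append]
  have : u.getLast?.isSome := List.getLast?_isSome.2 hu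
  obtain ⟨a, ha⟩ := Option.isSome_iff_exists.1 this
  simp [ha]

lemma rotate_one_wordPow (u : List A) (hu : u ≠ []) (p : ℕ) :
    (wordPow u p).rotate 1 = wordPow (u.rotate 1) p := by
  obtain ⟨a, t, rfl⟩ := List.exists_cons_of_ne_nil hu
  have h1 : (a :: t).rotate 1 = t ++ [a] := by
    simpa using List.rotate_cons_succ t a 0
  cases p with
  | zero => simp [wordPow]
  | succ p =>
    rw [h1, wordPow_succ]
    have h2 : (a :: t) ++ wordPow (a :: t) p = a :: (t ++ wordPow (a :: t) p) := rfl
    rw [h2]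
    have h3 : (a :: (t ++ wordPow (a :: t) p)).rotate 1
        = (t ++ wordPow (a :: t) p) ++ [a] := by
      simpa using List.rotate_cons_succ (t ++ wordPow (a :: t) p) a 0
    rw [h3, wordPow_succ]
    have h4 := wordPow_shift [a] t p
    simp only [List.singleton_append] at h4
    rw [List.append_assoc, h4]
    simp [List.append_assoc]

lemma rotate_wordPow (u : List A) (hu : u ≠ []) (p : ℕ) :
    ∀ i, (wordPow u p).rotate i = wordPow (u.rotate i) p := by
  intro i
  induction i with
  | zero => simp
  | succ i ih =>
    have h1 : (wordPow u p).rotate (i + 1) = ((wordPow u p).rotate i).rotate 1 := by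
      rw [List.rotate_rotate]
    have h2 : u.rotate (i + 1) = (u.rotate i).rotate 1 := by rw [List.rotate_rotate]
    rw [h1, ih, h2, rotate_one_wordPow (u.rotate i) (by
      intro h; apply hu
      have := List.length_rotate u i
      rw [h] at this
      exact List.length_eq_zero_iff.1 this.symm) p]

end PowLemmas

section LexLemmas
variable {A : Type*} [LinearOrder A]

lemma lexLe_refl (l : List A) : lexLe stdLt l l = true := by
  induction l with
  | nil => rfl
  | cons a t ih => simp [lexLe, stdLt, ih]

lemma lexLe_total : ∀ x y : List A, lexLe stdLt x y = true ∨ lexLe stdLt y x = true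
  | [], _ => Or.inl rfl
  | _ :: _, [] => Or.inr rfl
  | a :: x, b :: y => by
    rcases lt_trichotomy a b with h | h | h
    · left; simp [lexLe, stdLt, h]
    · subst h
      rcases lexLe_total x y with hx | hx
      · left; simp [lexLe, stdLt, hx]
      · right; simp [lexLe, stdLt, hx]
    · right; simp [lexLe, stdLt, h]

lemma lexLe_trans : ∀ x y z : List A,
    lexLe stdLt x y = true → lexLe stdLt y z = true → lexLe stdLt x z = true
  | [], _, _, _, _ => rfl
  | a :: x, [], _, h, _ => by simp [lexLe] at h
  | a :: x, b :: y, [], _, h => by simp [lexLe] at h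
  | a :: x, b :: y, c :: z, h1, h2 => by
    simp only [lexLe, stdLt, decide_eq_true_eq] at h1 h2 ⊢
    rcases lt_trichotomy a b with hab | hab | hab
    · rcases lt_trichotomy b c with hbc | hbc | hbc
      · simp [hab.trans hbc]
      · subst hbc; simp [hab]
      · simp [hab, not_lt.2 hab.le] at h1
        exfalso
        rcases lt_trichotomy b c with h' | h' | h'
        · exact absurd h' (not_lt.2 hbc.le)
        · exact absurd h' (ne_of_gt hbc)
        · simp [h', not_lt.2 h'.le] at h2
    · subst hab
      simp only [lt_irrefl, if_false, decide_false, Bool.false_eq_true] at h1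
      rcases lt_trichotomy a c with hac | hac | hac
      · simp [hac]
      · subst hac
        simp only [lt_irrefl, if_false, decide_false, Bool.false_eq_true] at h2 ⊢
        exact lexLe_trans x y z h1 h2
      · simp [hac, not_lt.2 hac.le] at h2
    · simp [hab, not_lt.2 hab.le] at h1

lemma lexLe_antisymm : ∀ x y : List A,
    lexLe stdLt x y = true → lexLe stdLt y x = true → x = y
  | [], [], _, _ => rfl
  | [], _ :: _, _, h => by simp [lexLe] at h
  | _ :: _, [], h, _ => by simp [lexLe] at h
  | a :: x, b :: y, h1, h2 => by
    simp only [lexLe, stdLt, decide_eq_true_eq] at h1 h2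
    rcases lt_trichotomy a b with hab | hab | hab
    · simp [hab, not_lt.2 hab.le] at h2
    · subst hab
      simp only [lt_irrefl, if_false, decide_false, Bool.false_eq_true] at h1 h2
      rw [lexLe_antisymm x y h1 h2]
    · simp [hab, not_lt.2 hab.le] at h1

lemma lexLe_append : ∀ u v x y : List A, u.length = v.length →
    lexLe stdLt u v = true → (u = v → lexLe stdLt x y = true) →
    lexLe stdLt (u ++ x) (v ++ y) = true
  | [], [], x, y, _, _, h2 => by simpa using h2 rfl
  | [], _ :: _, _, _, hl, _, _ => by simp at hl
  | _ :: _, [], _, _, hl, _, _ => by simp at hl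
  | a :: u, b :: v, x, y, hl, h1, h2 => by
    simp only [lexLe, stdLt, decide_eq_true_eq] at h1
    simp only [List.cons_append, lexLe, stdLt, decide_eq_true_eq]
    rcases lt_trichotomy a b with hab | hab | hab
    · simp [hab]
    · subst hab
      simp only [lt_irrefl, if_false, decide_false, Bool.false_eq_true] at h1 ⊢
      exact lexLe_append u v x y (by simpa using hl) h1
        (fun h => h2 (by rw [h]))
    · simp [hab, not_lt.2 hab.le] at h1

lemma lexLe_wordPow (u v : List A) (hl : u.length = v.length)
    (h : lexLe stdLt u v = true) (p : ℕ) :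
    lexLe stdLt (wordPow u p) (wordPow v p) = true := by
  induction p with
  | zero => rfl
  | succ p ih =>
    rw [wordPow_succ, wordPow_succ]
    exact lexLe_append u v _ _ hl h (fun h' => by rw [h']; exact lexLe_refl _)

end LexLemmas

section PermLemmas
variable {A : Type*} {β : Type*} {γ : Type*}

lemma flatMap_append_perm (l : List β) (f g : β → List γ) :
    (l.flatMap fun b => f b ++ g b).Perm (l.flatMap f ++ l.flatMap g) := by
  induction l with
  | nil => simp
  | cons a t ih =>
    simp only [List.flatMap_cons]
    rw [← Multiset.coe_eq_coe] at ih ⊢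
    simp only [← Multiset.coe_add] at ih ⊢
    rw [ih]; abel

lemma pairwise_flatMap_aux {R : γ → γ → Prop} {f : β → List γ} {l : List β}
    (h1 : ∀ b ∈ l, (f b).Pairwise R)
    (h2 : l.Pairwise (fun a b => ∀ x ∈ f a, ∀ y ∈ f b, R x y)) :
    (l.flatMap f).Pairwise R := by
  induction l with
  | nil => simp
  | cons a t ih =>
    rw [List.pairwise_cons] at h2
    simp only [List.flatMap_cons, List.pairwise_append]
    refine ⟨h1 a List.mem_cons_self, ih (fun b hb => h1 b (List.mem_cons_of_mem a hb)) h2.2, ?_⟩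
    intro x hx y hy
    obtain ⟨b, hb, hyb⟩ := List.mem_flatMap.1 hy
    exact h2.1 b hb x hx y hyb

lemma map_range_mod_perm (g : ℕ → List A) (n : ℕ) (hg : ∀ i, g i = g (i % n)) :
    ∀ p : ℕ, ((List.range (p * n)).map g).Perm
      ((List.range n).flatMap fun j => List.replicate p (g j)) := by
  intro p
  induction p with
  | zero => simp
  | succ p ih =>
    have h1 : (p + 1) * n = p * n + n := by ring
    rw [h1, List.range_add, List.map_append, List.map_map]
    have h2 : (List.range n).map (g ∘ fun x => p * n + x) = (List.range n).map g := by
      apply List.map_congr_left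
      intro j hj
      have hjn : j < n := List.mem_range.1 hj
      simp only [Function.comp]
      rw [hg (p * n + j), Nat.add_comm (p * n) j, Nat.mul_comm p n,
        Nat.add_mul_mod_self_left, Nat.mod_eq_of_lt hjn]
    rw [h2]
    have h3 : ((List.range n).flatMap fun j => List.replicate (p + 1) (g j)).Perm
        (((List.range n).flatMap fun j => List.replicate p (g j)) ++ (List.range n).map g) := by
      have h4 : (fun j => List.replicate (p + 1) (g j))
          = fun j => List.replicate p (g j) ++ [g j] := by
        funext j; rw [List.replicate_succ']
      rw [h4]
      refine (flatMap_append_perm _ _ _).trans ?_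
      have : (List.range n).flatMap (fun j => [g j]) = (List.range n).map g := by
        induction (List.range n) with
        | nil => rfl
        | cons a t iht => simp [List.flatMap_cons, iht]
      rw [this]
    exact (ih.append_right _).trans h3.symm

end PermLemmas

section BwtLemmas
variable {A : Type*} [LinearOrder A]

lemma mem_rotations {w v : List A} (h : v ∈ rotations w) : ∃ i, v = w.rotate i := by
  obtain ⟨i, _, rfl⟩ := List.mem_map.1 h
  exact ⟨i, rfl⟩

lemma rotations_wordPow_perm (u : List A) (hu : u ≠ []) (p : ℕ) :
    (rotations (wordPow u p)).Perm
      ((rotations u).flatMap fun v => List.replicate p (wordPow v p)) := by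
  unfold rotations
  rw [length_wordPow]
  have h1 : (List.range (p * u.length)).map (fun i => (wordPow u p).rotate i)
      = (List.range (p * u.length)).map (fun i => wordPow (u.rotate i) p) := by
    apply List.map_congr_left
    intro i _
    exact rotate_wordPow u hu p i
  rw [h1]
  have h2 : ((List.range u.length).map fun i => u.rotate i).flatMap
        (fun v => List.replicate p (wordPow v p))
      = (List.range u.length).flatMap fun j => List.replicate p (wordPow (u.rotate j) p) := by
    rw [List.flatMap_map]
  rw [h2]
  exact map_range_mod_perm (fun i => wordPow (u.rotate i) p) u.length
    (fun i => by
      show wordPow (u.rotate i) p = wordPow (u.rotate (i % u.length)) p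
      rw [List.rotate_mod]) p

lemma mergeSort_rotations_wordPow (u : List A) (hu : u ≠ []) (p : ℕ) :
    (rotations (wordPow u p)).mergeSort (lexLe stdLt)
      = ((rotations u).mergeSort (lexLe stdLt)).flatMap
          (fun v => List.replicate p (wordPow v p)) := by
  haveI : Std.Antisymm (fun a b : List A => lexLe stdLt a b = true) :=
    ⟨fun a b => lexLe_antisymm a b⟩
  have hlen : ∀ v ∈ (rotations u).mergeSort (lexLe stdLt), v.length = u.length := by
    intro v hv
    have hv' : v ∈ rotations u := ((rotations u).mergeSort_perm (lexLe stdLt)).mem_iff.1 hv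
    obtain ⟨i, rfl⟩ := mem_rotations hv'
    exact List.length_rotate u i
  refine (fun h1 h2 h3 => List.Perm.eq_of_pairwise' (r := fun a b : List A => lexLe stdLt a b = true) h2 h3 h1) ?_ ?_ ?_
  · refine ((rotations (wordPow u p)).mergeSort_perm _).trans ?_
    refine (rotations_wordPow_perm u hu p).trans ?_
    exact (List.Perm.flatMap_right _ ((rotations u).mergeSort_perm (lexLe stdLt)).symm)
  · exact List.pairwise_mergeSort
      (fun a b c => lexLe_trans a b c)
      (fun a b => by rcases lexLe_total a b with h | h <;> simp [h]) _
  · apply pairwise_flatMap_aux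
    · intro v _
      exact List.pairwise_replicate.2 (Or.inr (lexLe_refl _))
    · have hs := List.pairwise_mergeSort
        (le := lexLe stdLt)
        (fun a b c => lexLe_trans a b c)
        (fun a b => by rcases lexLe_total a b with h | h <;> simp [h]) (rotations u)
      refine hs.imp_of_mem ?_
      intro v w hv hw hvw
      intro x hx y hy
      rw [List.eq_of_mem_replicate hx, List.eq_of_mem_replicate hy]
      exact lexLe_wordPow v w ((hlen v hv).trans (hlen w hw).symm) hvw p

lemma bwt_wordPow (u : List A) (hu : u ≠ []) (p : ℕ) (hp : 1 ≤ p) :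
    bwt (wordPow u p) = (bwt u).flatMap (fun c => List.replicate p c) := by
  unfold bwt bwtBy
  rw [mergeSort_rotations_wordPow u hu p, List.filterMap_flatMap]
  have hlen : ∀ v ∈ (rotations u).mergeSort (lexLe stdLt), v ≠ [] := by
    intro v hv
    have hv' : v ∈ rotations u := ((rotations u).mergeSort_perm (lexLe stdLt)).mem_iff.1 hv
    obtain ⟨i, rfl⟩ := mem_rotations hv'
    intro h
    apply hu
    have := List.length_rotate u i
    rw [h] at this
    exact List.length_eq_zero_iff.1 this.symm
  generalize (rotations u).mergeSort (lexLe stdLt) = L at hlen ⊢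
  induction L with
  | nil => simp
  | cons v t ih =>
    have hv : v ≠ [] := hlen v List.mem_cons_self
    obtain ⟨a, ha⟩ := Option.isSome_iff_exists.1 (List.getLast?_isSome.2 hv)
    have hwa : (wordPow v p).getLast? = some a := by
      rw [getLast?_wordPow v hv p hp, ha]
    simp only [List.flatMap_cons, List.filterMap_cons, ha]
    rw [List.filterMap_replicate, hwa, ih (fun w hw => hlen w (List.mem_cons_of_mem v hw))]

lemma replicate_flatMap_replicate (p k : ℕ) (c : A) :
    (List.replicate k c).flatMap (fun x => List.replicate p x) = List.replicate (p * k) c := by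
  induction k with
  | zero => simp
  | succ k ih =>
    rw [List.replicate_succ, List.flatMap_cons, ih, Nat.mul_succ, Nat.add_comm,
      List.replicate_add]

lemma flatMap_replicate_inj (p : ℕ) (hp : 1 ≤ p) :
    ∀ L1 L2 : List A, L1.flatMap (fun c => List.replicate p c)
      = L2.flatMap (fun c => List.replicate p c) → L1 = L2 := by
  obtain ⟨q, rfl⟩ := Nat.exists_eq_add_of_le hp
  intro L1
  induction L1 with
  | nil =>
    intro L2 h
    cases L2 with
    | nil => rfl
    | cons b t => simp [List.replicate_succ, Nat.add_comm 1 q] at h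
  | cons a t ih =>
    intro L2 h
    cases L2 with
    | nil => simp [List.replicate_succ, Nat.add_comm 1 q] at h
    | cons b s =>
      simp only [List.flatMap_cons, Nat.add_comm 1 q, List.replicate_succ,
        List.cons_append, List.cons.injEq] at h
      obtain ⟨rfl, h2⟩ := h
      have h3 := List.append_cancel_left h2
      rw [ih s (by simpa [Nat.add_comm 1 q, List.replicate_succ] using h3)]

end BwtLemmas

/-- Let `w = u^p` with `u` primitive. Then `w` is `π`-clustering iff `u` is. -/
theorem clustering_pow_iff [Fintype A] [LinearOrder A] (π : Equiv.Perm A)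
    (u : List A) (p : ℕ) (hp : 1 ≤ p) (hu : Primitive u) :
    IsClustering π (wordPow u p) ↔ IsClustering π u := by
  have hu0 : u ≠ [] := hu.1
  unfold IsClustering IsClusteringBy
  have hb : bwtBy stdLt (wordPow u p) = (bwtBy stdLt u).flatMap (fun c => List.replicate p c) :=
    bwt_wordPow u hu0 p hp
  have hr : (sortedAlphabet (A := A) stdLt).flatMap
        (fun c => List.replicate ((wordPow u p).count (π c)) (π c))
      = ((sortedAlphabet (A := A) stdLt).flatMap
          (fun c => List.replicate (u.count (π c)) (π c))).flatMap
          (fun c => List.replicate p c) := by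
    rw [List.flatMap_assoc]
    simp only [replicate_flatMap_replicate, count_wordPow]
  rw [hb, hr]
  constructor
  · exact fun h => flatMap_replicate_inj p hp _ _ h
  · intro h; rw [h]

end BWTpaper
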